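/- Let κ, τ, M > 0 be real constants. For N ∈ ℕ and μ > 0 define ρ(N,μ) = 1 − max{μ/M, 2μ(N+1)/(κτ)} and Θ(N,μ) = (1 − ρ(N,μ))·M + (1 + ρ(N,μ))·κτ/(N+1) + μ. Then for every θ > 0 there exist N ∈ ℕ and μ > 0 such that Θ(N,μ) ≤ θ and ρ(N,μ) > 0. -/

import Mathlib

/-- Lemma 3.2: for every precision θ > 0 there exist N and μ > 0 such that
Θ(N,μ) ≤ θ and ρ(N,μ) > 0, where
ρ(N,μ) = 1 − max{μ/M, 2μ(N+1)/(κτ)} and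
Θ(N,μ) = (1 − ρ(N,μ))·M + (1 + ρ(N,μ))·κτ/(N+1) + μ. -/
theorem stmt_0 (κ τ M : ℝ) (hκ : 0 < κ) (hτ : 0 < τ) (hM : 0 < M)
    (ρ Θ : ℕ → ℝ → ℝ)
    (hρ : ∀ (N : ℕ) (μ : ℝ), ρ N μ = 1 - max (μ / M) (2 * μ * (N + 1) / (κ * τ)))
    (hΘ : ∀ (N : ℕ) (μ : ℝ),
      Θ N μ = (1 - ρ N μ) * M + (1 + ρ N μ) * (κ * τ / (N + 1)) + μ) :
    ∀ θ : ℝ, 0 < θ → ∃ (N : ℕ) (μ : ℝ), 0 < μ ∧ Θ N μ ≤ θ ∧ 0 < ρ N μ := by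
  intro θ hθ
  set N : ℕ := ⌈4 * κ * τ / θ⌉₊ with hNdef
  have hN1 : 4 * κ * τ / θ ≤ (N : ℝ) + 1 := by
    have := Nat.le_ceil (4 * κ * τ / θ)
    have : (4 * κ * τ / θ : ℝ) ≤ (N : ℝ) := this
    linarith
  have hNpos : (0 : ℝ) < (N : ℝ) + 1 := by positivity
  set C : ℝ := max (1 / M) (2 * ((N : ℝ) + 1) / (κ * τ)) with hCdef
  have hC : 0 < C := lt_of_lt_of_le (by positivity) (le_max_left _ _)
  have hCM1 : 0 < C * M + 1 := by positivity
  set μ : ℝ := min (1 / (2 * C)) (θ / (4 * (C * M + 1))) with hμdef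
  have hμ : 0 < μ := lt_min (by positivity) (by positivity)
  have hmax : max (μ / M) (2 * μ * ((N : ℝ) + 1) / (κ * τ)) = μ * C := by
    rw [hCdef, mul_max_of_nonneg _ _ hμ.le]
    congr 1
    · field_simp
    · field_simp
  have hρval : ρ N μ = 1 - μ * C := by rw [hρ, hmax]
  have hμC : μ * C ≤ 1 / 2 := by
    have h1 : μ ≤ 1 / (2 * C) := min_le_left _ _
    have := mul_le_mul_of_nonneg_right h1 hC.le
    calc μ * C ≤ 1 / (2 * C) * C := this
      _ = 1 / 2 := by field_simp
  have hμC0 : 0 ≤ μ * C := by positivity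
  have hρpos : 0 < ρ N μ := by rw [hρval]; linarith
  have hh : 0 < κ * τ / ((N : ℝ) + 1) := by positivity
  have hh2 : κ * τ / ((N : ℝ) + 1) ≤ θ / 4 := by
    rw [div_le_iff₀ hNpos]
    rw [div_le_iff₀ hθ] at hN1
    nlinarith
  have hμ2 : μ * (C * M + 1) ≤ θ / 4 := by
    have h1 : μ ≤ θ / (4 * (C * M + 1)) := min_le_right _ _
    have := mul_le_mul_of_nonneg_right h1 hCM1.le
    calc μ * (C * M + 1) ≤ θ / (4 * (C * M + 1)) * (C * M + 1) := this
      _ = θ / 4 := by field_simp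
  refine ⟨N, μ, hμ, ?_, hρpos⟩
  rw [hΘ, hρval]
  have hprod : 0 ≤ μ * C * (κ * τ / ((N : ℝ) + 1)) := by positivity
  nlinarith [hprod, hh, hh2, hμ2, hμC0]
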